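/- For every positive natural number n, the sequence r ↦ (1/n^r) · ∑_{k₁=1}^{n} ⋯ ∑_{k_r=1}^{n} gcd(n, k₁⋯k_r), viewed as a sequence of real numbers indexed by r, tends to n as r → ∞. -/

import Mathlib

open Finset Filter

theorem stmt_6 (n : ℕ) (hn : 0 < n) :
    Filter.Tendsto
      (fun r : ℕ =>
        (1 / (n : ℝ) ^ r) *
          ∑ k ∈ Fintype.piFinset (fun _ : Fin r => Finset.Icc 1 n),
            (Nat.gcd n (∏ i, k i) : ℝ))
      Filter.atTop (nhds (n : ℝ)) := by
  have hn' : (0:ℝ) < n := by exact_mod_cast hn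
  set q : ℝ := ((n:ℝ) - 1) / n with hq
  have hq0 : 0 ≤ q := div_nonneg (by linarith [hn'.le, (by exact_mod_cast hn : (1:ℝ) ≤ n)]) hn'.le
  have hq1 : q < 1 := (div_lt_one hn').2 (by linarith)
  -- lower/upper bound sequences
  have hL : Filter.Tendsto (fun r : ℕ => (n:ℝ) - n * q ^ r) Filter.atTop (nhds (n:ℝ)) := by
    have : Filter.Tendsto (fun r : ℕ => q ^ r) Filter.atTop (nhds 0) :=
      tendsto_pow_atTop_nhds_zero_of_lt_one hq0 hq1
    have := ((tendsto_const_nhds : Filter.Tendsto (fun _ : ℕ => (n:ℝ)) atTop (nhds n)).sub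
      ((tendsto_const_nhds (x := (n:ℝ))).mul this))
    simpa using this
  refine tendsto_of_tendsto_of_tendsto_of_le_of_le hL tendsto_const_nhds ?_ ?_
  · -- lower bound
    intro r
    dsimp only
    set T := Fintype.piFinset (fun _ : Fin r => Finset.Icc 1 n) with hT
    have hpow : (0:ℝ) < (n:ℝ) ^ r := pow_pos hn' r
    set A := T.filter (fun k => ∃ i, k i = n) with hA
    set B := T.filter (fun k => ¬ ∃ i, k i = n) with hB
    have hBcard : B.card = (n-1)^r := by
      have hBeq : B = Fintype.piFinset (fun _ : Fin r => Finset.Icc 1 (n-1)) := by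
        ext k
        simp only [hB, hT, Finset.mem_filter, Fintype.mem_piFinset, Finset.mem_Icc, not_exists]
        constructor
        · rintro ⟨h1, h2⟩ i
          have := h1 i; have := h2 i; omega
        · intro h
          refine ⟨fun i => ?_, fun i => ?_⟩ <;> (have := h i; omega)
      rw [hBeq, Fintype.card_piFinset]
      simp [Nat.card_Icc]
    have hTcard : T.card = n ^ r := by
      rw [hT, Fintype.card_piFinset]
      simp [Nat.card_Icc]
    have hABcard : A.card + (n-1) ^ r = n ^ r := by
      rw [← hBcard, ← hTcard, hA, hB]
      classical
      convert Finset.card_filter_add_card_filter_not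
        (s := T) (p := fun k => ∃ i, k i = n) using 3
    have hAcardR : (A.card : ℝ) = (n:ℝ)^r - ((n:ℝ)-1)^r := by
      have h1 : ((n-1:ℕ):ℝ) = (n:ℝ) - 1 := by
        push_cast [Nat.cast_sub hn]; ring
      have : (A.card : ℝ) + ((n:ℝ)-1)^r = (n:ℝ)^r := by
        rw [← h1]
        exact_mod_cast hABcard
      linarith
    -- sum over A
    have hAsum : ∀ k ∈ A, (Nat.gcd n (∏ i, k i) : ℝ) = (n:ℝ) := by
      intro k hk
      obtain ⟨-, i, hi⟩ := Finset.mem_filter.mp hk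
      have hdvd : n ∣ ∏ j, k j := hi ▸ Finset.dvd_prod_of_mem k (Finset.mem_univ i)
      rw [Nat.gcd_eq_left hdvd]
    have hsub : A ⊆ T := Finset.filter_subset _ _
    have hge : ((A.card : ℝ) * n) ≤ ∑ k ∈ T, (Nat.gcd n (∏ i, k i) : ℝ) := by
      calc (A.card : ℝ) * n = ∑ k ∈ A, (Nat.gcd n (∏ i, k i) : ℝ) := by
            rw [Finset.sum_congr rfl hAsum, Finset.sum_const, nsmul_eq_mul]
        _ ≤ _ := Finset.sum_le_sum_of_subset_of_nonneg hsub
            (fun k _ _ => by positivity)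
    have key : ((n:ℝ)^r - ((n:ℝ)-1)^r) * n ≤ ∑ k ∈ T, (Nat.gcd n (∏ i, k i) : ℝ) := by
      rw [← hAcardR]; exact hge
    have heq : (n:ℝ) - n * q ^ r = (((n:ℝ)^r - ((n:ℝ)-1)^r) * n) / (n:ℝ)^r := by
      rw [hq, div_pow]
      field_simp
    rw [heq, div_le_iff₀ hpow]
    calc ((n:ℝ)^r - ((n:ℝ)-1)^r) * n ≤ ∑ k ∈ T, (Nat.gcd n (∏ i, k i) : ℝ) := key
      _ = (1 / (n:ℝ)^r * ∑ k ∈ T, (Nat.gcd n (∏ i, k i) : ℝ)) * (n:ℝ)^r := by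
          field_simp
  · -- upper bound
    intro r
    dsimp only
    set T := Fintype.piFinset (fun _ : Fin r => Finset.Icc 1 n) with hT
    have hpow : (0:ℝ) < (n:ℝ) ^ r := pow_pos hn' r
    have hTcard : T.card = n ^ r := by
      rw [hT, Fintype.card_piFinset]
      simp [Nat.card_Icc]
    have hle : ∑ k ∈ T, (Nat.gcd n (∏ i, k i) : ℝ) ≤ (n:ℝ)^r * n := by
      calc ∑ k ∈ T, (Nat.gcd n (∏ i, k i) : ℝ) ≤ ∑ k ∈ T, (n:ℝ) :=
            Finset.sum_le_sum (fun k _ => by exact_mod_cast Nat.gcd_le_left _ hn)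
        _ = (T.card : ℝ) * n := by rw [Finset.sum_const, nsmul_eq_mul]
        _ = (n:ℝ)^r * n := by rw [hTcard]; push_cast; ring
    rw [one_div, inv_mul_le_iff₀ hpow]
    linarith [hle, mul_comm ((n:ℝ)^r) (n:ℝ)]
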